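/- Consider the best-response opinion dynamics on the ring graph with an odd number n ≥ 3 of vertices, where agent 1 is partially stubborn with parameter K₁ > 0 and all other agents have K_i = 0. Let λ_A be the largest eigenvalue of the matrix A. Then the convergence time T = 1/(1 − λ_A) satisfies T ≤ 2 · max{ (2 + K₁ + (n² − 1)/2)/K₁ , (n² − 1)/4 }. -/

import Mathlib

open Matrix Finset

private lemma zmodSum {n : ℕ} [NeZero n] (f : ZMod n → ℝ) :
    ∑ i : ZMod n, f i = ∑ j ∈ range n, f (j : ZMod n) := by
  refine Finset.sum_nbij' (fun i => ZMod.val i) (fun j => (j : ZMod n)) ?_ ?_ ?_ ?_ ?_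
  · intro a _; exact Finset.mem_range.mpr (ZMod.val_lt a)
  · intro a _; exact Finset.mem_univ _
  · intro a _; exact ZMod.natCast_zmod_val a
  · intro a ha; exact ZMod.val_cast_of_lt (Finset.mem_range.mp ha)
  · intro a _; rw [ZMod.natCast_zmod_val]

set_option maxHeartbeats 1000000 in
/-- On the ring graph with an odd number `n ≥ 3` of vertices, with a
single partially stubborn agent `0` with parameter `K₁ > 0`, the convergence time
`T = 1/(1 − λ_A)` satisfies `T ≤ 2·max{(2 + K₁ + (n² − 1)/2)/K₁, (n² − 1)/4}`. -/
theorem stmt19 {n : ℕ} [NeZero n] (hn : 3 ≤ n) (hodd : Odd n)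
    (K1 : ℝ) (hK1 : 0 < K1)
    (K : ZMod n → ℝ) (hK0 : K 0 = K1) (hKrest : ∀ i : ZMod n, i ≠ 0 → K i = 0)
    (A : Matrix (ZMod n) (ZMod n) ℝ)
    (hA : ∀ i j : ZMod n,
      A i j = if j = i + 1 ∨ j = i - 1 then 1 / (2 + K i) else 0)
    (lamA : ℝ) (hmem : lamA ∈ spectrum ℝ A) (hub : ∀ μ ∈ spectrum ℝ A, |μ| ≤ lamA) :
    1 / (1 - lamA)
      ≤ 2 * max ((2 + K1 + ((n : ℝ) ^ 2 - 1) / 2) / K1) (((n : ℝ) ^ 2 - 1) / 4) := by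
  -- basic facts about K
  have hKnn : ∀ i : ZMod n, 0 ≤ K i := by
    intro i
    by_cases h : i = 0
    · rw [h, hK0]; exact hK1.le
    · rw [hKrest i h]
  have hKpos : ∀ i : ZMod n, 0 < 2 + K i := fun i => by have := hKnn i; linarith
  -- extract an eigenvector
  obtain ⟨v, hv0, hvA⟩ : ∃ v : ZMod n → ℝ, v ≠ 0 ∧ A.mulVec v = lamA • v := by
    rw [← AlgEquiv.spectrum_eq (Matrix.toLinAlgEquiv' (n := ZMod n) (R := ℝ))] at hmem
    obtain ⟨v, hv⟩ := Module.End.HasEigenvalue.exists_hasEigenvector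
      (Module.End.hasEigenvalue_iff_mem_spectrum.mpr hmem)
    refine ⟨v, hv.2, ?_⟩
    have := hv.apply_eq_smul
    rwa [Matrix.toLinAlgEquiv'_apply] at this
  -- n = 2m+1
  obtain ⟨m, hm⟩ := hodd
  have hm1 : 1 ≤ m := by omega
  -- notation
  set u : ℕ → ℝ := fun j => v (j : ZMod n) with hu
  set d : ℕ → ℝ := fun j => u (j + 1) - u j with hd
  set S : ℝ := ∑ j ∈ range n, (u j) ^ 2 with hS
  set D : ℝ := ∑ j ∈ range n, (d j) ^ 2 with hDdef
  set Q : ℝ := ∑ i : ZMod n, (2 + K i) * (v i) ^ 2 with hQ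
  -- the eigen-equation, per coordinate
  have heig : ∀ i : ZMod n, lamA * ((2 + K i) * v i) = v (i + 1) + v (i - 1) := by
    intro i
    have hab : (i + 1 : ZMod n) ≠ i - 1 := by
      intro h
      have h2 : ((2 : ℕ) : ZMod n) = 0 := by push_cast; linear_combination h
      have hdvd := (ZMod.natCast_eq_zero_iff 2 n).mp h2
      have := Nat.le_of_dvd (by norm_num) hdvd
      omega
    have hsum : (A.mulVec v) i = (1 / (2 + K i)) * v (i + 1) + (1 / (2 + K i)) * v (i - 1) := by
      have hterm : ∀ j : ZMod n, A i j * v j =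
          (if j = i + 1 then (1 / (2 + K i)) * v (i + 1) else 0) +
          (if j = i - 1 then (1 / (2 + K i)) * v (i - 1) else 0) := by
        intro j
        rw [hA]
        by_cases h1 : j = i + 1
        · subst h1
          have h2 : ¬ (i + 1 = i - 1) := hab
          simp [h2]
        · by_cases h2 : j = i - 1
          · subst h2; simp [h1]
          · simp [h1, h2]
      rw [Matrix.mulVec, dotProduct]
      simp_rw [hterm]
      rw [Finset.sum_add_distrib, Finset.sum_ite_eq' univ (i + 1), Finset.sum_ite_eq' univ (i - 1)]
      simp
    have h0 := congrFun hvA i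
    rw [hsum] at h0
    simp only [Pi.smul_apply, smul_eq_mul] at h0
    have hne : (2 + K i) ≠ 0 := ne_of_gt (hKpos i)
    field_simp at h0 ⊢
    linarith [h0]
  -- shared sums and identities
  have hu0 : u 0 = v 0 := by simp [hu]
  have hreidx : ∀ f : ZMod n → ℝ, ∑ i : ZMod n, f (i + 1) = ∑ i : ZMod n, f i := by
    intro f
    exact Fintype.sum_equiv (Equiv.addRight (1 : ZMod n)) _ _ (fun i => rfl)
  have hKsum : ∑ i : ZMod n, K i * (v i) ^ 2 = K1 * (v 0) ^ 2 := by
    rw [Fintype.sum_eq_single (0 : ZMod n) (fun i hi => by rw [hKrest i hi, zero_mul]), hK0]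
  have hSz : ∑ i : ZMod n, (v i) ^ 2 = S := by
    rw [hS]; exact zmodSum (fun i => (v i) ^ 2)
  have hDz : ∑ i : ZMod n, (v (i + 1) - v i) ^ 2 = D := by
    rw [hDdef]
    rw [zmodSum (fun i => (v (i + 1) - v i) ^ 2)]
    apply Finset.sum_congr rfl
    intro j _
    simp only [hd, hu]
    push_cast
    ring_nf
  have hQS : Q = 2 * S + K1 * (v 0) ^ 2 := by
    rw [hQ, ← hSz, ← hKsum, Finset.mul_sum, ← Finset.sum_add_distrib]
    apply Finset.sum_congr rfl
    intro i _
    ring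
  -- key identity : (1 - lamA) * Q = D + K1 * v 0 ^ 2
  have hKEY : (1 - lamA) * Q = D + K1 * (v 0) ^ 2 := by
    have hcross : ∑ i : ZMod n, v (i - 1) * v i = ∑ i : ZMod n, v i * v (i + 1) := by
      rw [← hreidx (fun i => v (i - 1) * v i)]
      apply Finset.sum_congr rfl
      intro i _
      simp [mul_comm]
    have hlamQ : lamA * Q = 2 * ∑ i : ZMod n, v i * v (i + 1) := by
      have : lamA * Q = ∑ i : ZMod n, (v (i + 1) + v (i - 1)) * v i := by
        rw [hQ, Finset.mul_sum]
        apply Finset.sum_congr rfl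
        intro i _
        rw [← heig i]; ring
      rw [this]
      have h2 : ∑ i : ZMod n, (v (i + 1) + v (i - 1)) * v i
          = (∑ i : ZMod n, v (i + 1) * v i) + ∑ i : ZMod n, v (i - 1) * v i := by
        rw [← Finset.sum_add_distrib]; apply Finset.sum_congr rfl; intro i _; ring
      rw [h2, hcross]
      have h3 : ∑ i : ZMod n, v (i + 1) * v i = ∑ i : ZMod n, v i * v (i + 1) := by
        apply Finset.sum_congr rfl; intro i _; ring
      rw [h3]; ring
    have hDexp : D = 2 * S - 2 * ∑ i : ZMod n, v i * v (i + 1) := by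
      rw [← hDz]
      have : ∑ i : ZMod n, (v (i + 1) - v i) ^ 2
          = (∑ i : ZMod n, (v (i + 1)) ^ 2) + (∑ i : ZMod n, (v i) ^ 2)
            - 2 * ∑ i : ZMod n, v i * v (i + 1) := by
        rw [Finset.mul_sum, ← Finset.sum_add_distrib, ← Finset.sum_sub_distrib]
        apply Finset.sum_congr rfl
        intro i _
        ring
      rw [this, hreidx (fun i => (v i) ^ 2), hSz]
      ring
    linear_combination hQS - hlamQ - hDexp
  -- Poincaré inequality
  have hPoin : S ≤ 2 * n * (v 0) ^ 2 + (m * (m + 1) : ℕ) * D := by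
    have hun : u n = u 0 := by simp [hu, ZMod.natCast_self]
    have hP1 : ∀ k : ℕ, ∑ j ∈ range k, d j = u k - u 0 := by
      intro k; simpa [hd] using Finset.sum_range_sub u k
    have hP2 : ∀ k, k ≤ n → ∑ j ∈ Ico k n, d j = u 0 - u k := by
      intro k hk
      rw [Finset.sum_Ico_eq_sub _ hk, hP1, hP1, hun]; ring
    set DR : ℝ := ∑ j ∈ range m, d j ^ 2 with hDR
    set DL : ℝ := ∑ j ∈ Ico (m + 1) n, d j ^ 2 with hDL
    have hDRD : DR + DL ≤ D := by
      rw [hDdef, hDR, hDL, Finset.range_eq_Ico, Finset.range_eq_Ico,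
        ← Finset.sum_Ico_consecutive (fun j => d j ^ 2) (Nat.zero_le m) (by omega : m ≤ n),
        ← Finset.range_eq_Ico]
      have : ∑ j ∈ Ico (m + 1) n, d j ^ 2 ≤ ∑ j ∈ Ico m n, d j ^ 2 :=
        Finset.sum_le_sum_of_subset_of_nonneg
          (Finset.Ico_subset_Ico (by omega) le_rfl) (fun _ _ _ => sq_nonneg _)
      linarith
    have hDRnn : 0 ≤ DR := Finset.sum_nonneg fun _ _ => sq_nonneg _
    have hDLnn : 0 ≤ DL := Finset.sum_nonneg fun _ _ => sq_nonneg _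
    have hR : ∀ k ∈ range (m + 1), u k ^ 2 ≤ 2 * u 0 ^ 2 + 2 * (k : ℝ) * DR := by
      intro k hk
      have hkm : k ≤ m := by have := Finset.mem_range.mp hk; omega
      have hcs : (u k - u 0) ^ 2 ≤ (k : ℝ) * ∑ j ∈ range k, d j ^ 2 := by
        rw [← hP1]
        have := sq_sum_le_card_mul_sum_sq (s := range k) (f := d)
        simpa [Finset.card_range] using this
      have hsub : ∑ j ∈ range k, d j ^ 2 ≤ DR :=
        Finset.sum_le_sum_of_subset_of_nonneg
          (Finset.range_subset_range.mpr hkm) (fun _ _ _ => sq_nonneg _)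
      have e := mul_le_mul_of_nonneg_left hsub (Nat.cast_nonneg (α := ℝ) k)
      nlinarith [sq_nonneg (2 * u 0 - u k)]
    have hL : ∀ k ∈ Ico (m + 1) n, u k ^ 2 ≤ 2 * u 0 ^ 2 + 2 * ((n : ℝ) - k) * DL := by
      intro k hk
      obtain ⟨hk1, hk2⟩ := Finset.mem_Ico.mp hk
      have hcs : (u 0 - u k) ^ 2 ≤ ((n : ℝ) - k) * ∑ j ∈ Ico k n, d j ^ 2 := by
        rw [← hP2 k hk2.le]
        have := sq_sum_le_card_mul_sum_sq (s := Ico k n) (f := d)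
        have hcard : ((Ico k n).card : ℝ) = (n : ℝ) - k := by
          rw [Nat.card_Ico, Nat.cast_sub hk2.le]
        rwa [hcard] at this
      have hsub : ∑ j ∈ Ico k n, d j ^ 2 ≤ DL :=
        Finset.sum_le_sum_of_subset_of_nonneg
          (Finset.Ico_subset_Ico hk1 le_rfl) (fun _ _ _ => sq_nonneg _)
      have hnk : (0 : ℝ) ≤ (n : ℝ) - k := by
        have : (k : ℝ) ≤ (n : ℝ) := by exact_mod_cast hk2.le
        linarith
      have e := mul_le_mul_of_nonneg_left hsub hnk
      nlinarith [sq_nonneg (2 * u 0 - u k)]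
    have hgauss0 : ∑ j ∈ range m, (j : ℝ) = m * (m - 1) / 2 := by
      have h := Finset.sum_range_id_mul_two m
      have h2 : ((∑ i ∈ range m, i : ℕ) : ℝ) * 2 = (m : ℝ) * ((m : ℝ) - 1) := by
        rw [← Nat.cast_ofNat, ← Nat.cast_mul, h]
        rw [Nat.cast_mul, Nat.cast_sub hm1]
        norm_num
      rw [← Nat.cast_sum] at *
      linarith
    have hgauss1 : ∑ k ∈ range (m + 1), (k : ℝ) = m * (m + 1) / 2 := by
      rw [Finset.sum_range_succ, hgauss0]
      push_cast
      ring
    have hgauss2 : ∑ k ∈ Ico (m + 1) n, ((n : ℝ) - k) = m * (m + 1) / 2 := by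
      rw [Finset.sum_Ico_eq_sum_range]
      have hnm : n - (m + 1) = m := by omega
      rw [hnm]
      have : ∀ j ∈ range m, (n : ℝ) - ((m + 1 + j : ℕ) : ℝ) = (m : ℝ) - j := by
        intro j _
        have : (n : ℝ) = 2 * m + 1 := by rw [hm]; push_cast; ring
        rw [this]; push_cast; ring
      rw [Finset.sum_congr rfl this, Finset.sum_sub_distrib, Finset.sum_const,
        Finset.card_range, hgauss0]
      push_cast
      ring
    have hSR : ∑ k ∈ range (m + 1), u k ^ 2
        ≤ 2 * ((m : ℝ) + 1) * u 0 ^ 2 + (m : ℝ) * ((m : ℝ) + 1) * DR := by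
      calc ∑ k ∈ range (m + 1), u k ^ 2
          ≤ ∑ k ∈ range (m + 1), (2 * u 0 ^ 2 + 2 * (k : ℝ) * DR) := Finset.sum_le_sum hR
        _ = 2 * ((m : ℝ) + 1) * u 0 ^ 2 + (m : ℝ) * ((m : ℝ) + 1) * DR := by
            rw [Finset.sum_add_distrib, Finset.sum_const, Finset.card_range]
            have : ∑ k ∈ range (m + 1), 2 * (k : ℝ) * DR
                = (∑ k ∈ range (m + 1), (k : ℝ)) * (2 * DR) := by
              rw [Finset.sum_mul]
              apply Finset.sum_congr rfl
              intro k _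
              ring
            rw [this, hgauss1]
            push_cast
            ring
    have hSL : ∑ k ∈ Ico (m + 1) n, u k ^ 2
        ≤ 2 * (m : ℝ) * u 0 ^ 2 + (m : ℝ) * ((m : ℝ) + 1) * DL := by
      calc ∑ k ∈ Ico (m + 1) n, u k ^ 2
          ≤ ∑ k ∈ Ico (m + 1) n, (2 * u 0 ^ 2 + 2 * ((n : ℝ) - k) * DL) :=
            Finset.sum_le_sum hL
        _ = 2 * (m : ℝ) * u 0 ^ 2 + (m : ℝ) * ((m : ℝ) + 1) * DL := by
            rw [Finset.sum_add_distrib, Finset.sum_const, Nat.card_Ico]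
            have : ∑ k ∈ Ico (m + 1) n, 2 * ((n : ℝ) - k) * DL
                = (∑ k ∈ Ico (m + 1) n, ((n : ℝ) - k)) * (2 * DL) := by
              rw [Finset.sum_mul]
              apply Finset.sum_congr rfl
              intro k _
              ring
            rw [this, hgauss2]
            have hcard : n - (m + 1) = m := by omega
            rw [hcard]
            push_cast
            ring
    have hsplit : S = (∑ k ∈ range (m + 1), u k ^ 2) + ∑ k ∈ Ico (m + 1) n, u k ^ 2 := by
      rw [hS, Finset.range_eq_Ico, Finset.range_eq_Ico]
      exact (Finset.sum_Ico_consecutive (fun k => u k ^ 2)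
        (Nat.zero_le (m + 1)) (by omega : m + 1 ≤ n)).symm
    have hcast : ((m * (m + 1) : ℕ) : ℝ) = (m : ℝ) * ((m : ℝ) + 1) := by push_cast; ring
    have hncast' : (n : ℝ) = 2 * (m : ℝ) + 1 := by rw [hm]; push_cast; ring
    have hmmnn : (0 : ℝ) ≤ (m : ℝ) * ((m : ℝ) + 1) := by positivity
    have e := mul_le_mul_of_nonneg_left hDRD hmmnn
    rw [hcast, hncast', ← hu0]
    linarith
  -- positivity
  have hQpos : 0 < Q := by
    obtain ⟨i, hi⟩ := Function.ne_iff.mp hv0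
    rw [hQ]
    apply Finset.sum_pos' (fun j _ => mul_nonneg (hKpos j).le (sq_nonneg _))
    refine ⟨i, Finset.mem_univ i, mul_pos (hKpos i) ?_⟩
    have : v i ^ 2 ≠ 0 := pow_ne_zero 2 hi
    exact lt_of_le_of_ne (sq_nonneg _) (Ne.symm this)
  have hDnn : 0 ≤ D := Finset.sum_nonneg fun j _ => sq_nonneg _
  -- conclusion
  set M : ℝ := max ((2 + K1 + ((n : ℝ) ^ 2 - 1) / 2) / K1) (((n : ℝ) ^ 2 - 1) / 4) with hM
  have hncast : (n : ℝ) = 2 * m + 1 := by rw [hm]; push_cast; ring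
  have hmm : ((m * (m + 1) : ℕ) : ℝ) = ((n : ℝ) ^ 2 - 1) / 4 := by
    rw [hncast]; push_cast; ring
  have hMge : ((n : ℝ) ^ 2 - 1) / 4 ≤ M := le_max_right _ _
  have hMge' : (2 + K1 + ((n : ℝ) ^ 2 - 1) / 2) / K1 ≤ M := le_max_left _ _
  have hn3 : (3 : ℝ) ≤ (n : ℝ) := by exact_mod_cast hn
  have hMpos : 0 < M := lt_of_lt_of_le (by nlinarith) hMge
  -- Q ≤ 2 M (D + K1 v0²)
  have hQle : Q ≤ 2 * M * (D + K1 * (v 0) ^ 2) := by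
    have h1 : 2 + K1 + ((n : ℝ) ^ 2 - 1) / 2 ≤ M * K1 := by
      rw [div_le_iff₀ hK1] at hMge'; linarith
    have hv0 : 0 ≤ (v 0) ^ 2 := sq_nonneg _
    rw [hQS]
    rw [hmm] at hPoin
    have e1 : ((n : ℝ) ^ 2 - 1) / 4 * D ≤ M * D := mul_le_mul_of_nonneg_right hMge hDnn
    have e2 : (2 + K1 + ((n : ℝ) ^ 2 - 1) / 2) * (v 0) ^ 2 ≤ M * K1 * (v 0) ^ 2 :=
      mul_le_mul_of_nonneg_right h1 hv0
    have e4 : 0 ≤ ((n : ℝ) ^ 2 - 4 * n + 3) * (v 0) ^ 2 :=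
      mul_nonneg (by nlinarith) hv0
    have e5 : 0 ≤ K1 * (v 0) ^ 2 := mul_nonneg hK1.le hv0
    linarith
  -- finish
  have ht : (0 : ℝ) < 1 - lamA := by
    by_contra h
    push_neg at h
    have : (1 - lamA) * Q ≤ 0 := mul_nonpos_of_nonpos_of_nonneg h hQpos.le
    nlinarith [sq_nonneg (v 0)]
  rw [div_le_iff₀ ht]
  have : Q ≤ 2 * M * ((1 - lamA) * Q) := by rw [hKEY]; exact hQle
  have h2 : 1 ≤ 2 * M * (1 - lamA) := by
    rw [← mul_le_mul_iff_of_pos_right hQpos]; linarith [this]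
  linarith [h2]
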